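/- (Relations between dual variables of the subproblems — Theorem 3 of the paper.) If (x_{t,i}, u_{t,i}, x̄_i, d̄_i) is an optimal solution of the extended split MPC problem, then there exist Lagrange multipliers λ_{0,i} (for x_{0,i} = x̄_i), λ_{t+1,i} (for each dynamics constraint), λ_{tc,i} (for each terminal constraint, i < p), λ̂_{−1} (for x̄_0 = x̄) and λ̂_i, i = 0,…,p−1 (for each coupling constraint), which satisfy the stage stationarity conditions H_{x,t,i}x_{t,i} + H_{xu,t,i}u_{t,i} + f_{x,t,i} − λ_{t,i} + A_{t,i}ᵀλ_{t+1,i} = 0 and H_{xu,t,i}ᵀx_{t,i} + H_{u,t,i}u_{t,i} + f_{u,t,i} + B_{t,i}ᵀλ_{t+1,i} = 0 for all stages, together with H_{N_p,p}x_{N_p,p} + f_{N_p,p} − λ_{N_p,p} = 0, and which moreover satisfy: λ_{0,p} = λ̂_{p−1}; λ_{0,i} = λ̂_{i−1} − A_{c,i}ᵀ(λ_{tc,i} + λ̂_i) for i = 0,…,p−1; T_{c,i}ᵀ(λ_{tc,i} + λ̂_i) = 0 for i = 0,…,p−1; and λ_{N_i,i} = −λ_{tc,i} for i = 0,…,p−1.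 -/

import Mathlib

open Matrix Finset

/-! ### Generic helper lemmas -/

lemma dot_sym {n : ℕ} {M : Matrix (Fin n) (Fin n) ℝ} (h : Mᵀ = M) (v w : Fin n → ℝ) :
    v ⬝ᵥ (M *ᵥ w) = w ⬝ᵥ (M *ᵥ v) := by
  rw [dotProduct_mulVec, dotProduct_comm]
  nth_rewrite 1 [← h]
  rw [vecMul_transpose]

lemma dot_trans {n m : ℕ} (M : Matrix (Fin n) (Fin m) ℝ) (v : Fin n → ℝ) (w : Fin m → ℝ) :
    v ⬝ᵥ (M *ᵥ w) = (Mᵀ *ᵥ v) ⬝ᵥ w := by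
  rw [dotProduct_mulVec, mulVec_transpose]

lemma dot_cancel {n : ℕ} {a b : Fin n → ℝ} (h : ∀ v, a ⬝ᵥ v = b ⬝ᵥ v) : a = b := by
  funext k
  have := h (Pi.single k 1)
  simpa [dotProduct_single] using this

lemma functional_rep {n : ℕ} (φ : (Fin n → ℝ) → ℝ)
    (hadd : ∀ v w, φ (v + w) = φ v + φ w)
    (hsmul : ∀ (c : ℝ) v, φ (c • v) = c * φ v) (v : Fin n → ℝ) :
    φ v = (fun k => φ (Pi.single k 1)) ⬝ᵥ v := by
  let L : (Fin n → ℝ) →ₗ[ℝ] ℝ :=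
    { toFun := φ, map_add' := hadd, map_smul' := hsmul }
  have hL : ∀ w, φ w = L w := fun _ => rfl
  have hs : ∀ i : Fin n, (fun j => if i = j then (1:ℝ) else 0) = Pi.single i 1 := by
    intro i; funext j; simp [Pi.single_apply, eq_comm]
  rw [hL]
  conv_lhs => rw [pi_eq_sum_univ v, map_sum]
  simp only [hs, LinearMap.map_smul, smul_eq_mul]
  simp [dotProduct, mul_comm, ← hL]

lemma psi_emb_rep {W : Type*} [AddCommGroup W] [Module ℝ W] (ψ : W →ₗ[ℝ] ℝ) {n : ℕ}
    (E : (Fin n → ℝ) →ₗ[ℝ] W) (v : Fin n → ℝ) :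
    ψ (E v) = (fun k => ψ (E (Pi.single k 1))) ⬝ᵥ v :=
  functional_rep (fun w => ψ (E w)) (by simp) (by simp [smul_eq_mul]) v

lemma scalar_quad_zero {l s : ℝ} (hs : 0 ≤ s) (h : ∀ ε : ℝ, 0 ≤ ε * l + ε ^ 2 * s) : l = 0 := by
  by_contra hl
  have hl2 : 0 < l ^ 2 := by positivity
  have hpos : (0:ℝ) < 2 * s + 1 := by linarith
  have h1 := h (-l / (2 * s + 1))
  have h2 : (-l / (2 * s + 1)) * l + (-l / (2 * s + 1)) ^ 2 * s
      = (-(l ^ 2) * (s + 1)) / (2 * s + 1) ^ 2 := by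
    field_simp
    ring
  rw [h2] at h1
  have h3 : (0:ℝ) < (2 * s + 1) ^ 2 := by positivity
  have h4 := (le_div_iff₀ h3).mp h1
  nlinarith

lemma exists_functional_factor {V W : Type*} [AddCommGroup V] [Module ℝ V]
    [AddCommGroup W] [Module ℝ W] (C : V →ₗ[ℝ] W) (G : V →ₗ[ℝ] ℝ)
    (h : ∀ v, C v = 0 → G v = 0) :
    ∃ ψ : W →ₗ[ℝ] ℝ, ∀ v, ψ (C v) = G v := by
  have hker : LinearMap.ker C ≤ LinearMap.ker G := fun v hv => h v hv
  let G' : (V ⧸ LinearMap.ker C) →ₗ[ℝ] ℝ := (LinearMap.ker C).liftQ G hker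
  let e := C.quotKerEquivRange
  let ψ₀ : (LinearMap.range C) →ₗ[ℝ] ℝ := G' ∘ₗ e.symm.toLinearMap
  obtain ⟨ψ, hψ⟩ := ψ₀.exists_extend
  refine ⟨ψ, fun v => ?_⟩
  have h2 : e.symm ⟨C v, LinearMap.mem_range_self C v⟩ = Submodule.Quotient.mk v := by
    apply e.injective
    rw [LinearEquiv.apply_symm_apply]
    ext
    simp [e, LinearMap.quotKerEquivRange_apply_mk]
  calc ψ (C v) = (ψ ∘ₗ (LinearMap.range C).subtype) ⟨C v, LinearMap.mem_range_self C v⟩ := rfl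
    _ = ψ₀ ⟨C v, LinearMap.mem_range_self C v⟩ := by rw [hψ]
    _ = G' (Submodule.Quotient.mk v) := by
        simp only [ψ₀, LinearMap.comp_apply, LinearEquiv.coe_toLinearMap, h2]
    _ = G v := Submodule.liftQ_apply _ _ _

lemma stage_expand {n m : ℕ} (Hx : Matrix (Fin n) (Fin n) ℝ) (Hxu : Matrix (Fin n) (Fin m) ℝ)
    (Hu : Matrix (Fin m) (Fin m) ℝ) (hx : Hxᵀ = Hx) (hu : Huᵀ = Hu)
    (fx : Fin n → ℝ) (fu : Fin m → ℝ) (x dx : Fin n → ℝ) (u du : Fin m → ℝ) (ε : ℝ) :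
    ((1:ℝ)/2) * ((x + ε • dx) ⬝ᵥ (Hx *ᵥ (x + ε • dx))
        + 2 * ((x + ε • dx) ⬝ᵥ (Hxu *ᵥ (u + ε • du)))
        + (u + ε • du) ⬝ᵥ (Hu *ᵥ (u + ε • du)))
      + fx ⬝ᵥ (x + ε • dx) + fu ⬝ᵥ (u + ε • du)
    = (((1:ℝ)/2) * (x ⬝ᵥ (Hx *ᵥ x) + 2 * (x ⬝ᵥ (Hxu *ᵥ u)) + u ⬝ᵥ (Hu *ᵥ u))
        + fx ⬝ᵥ x + fu ⬝ᵥ u)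
      + ε * ((Hx *ᵥ x + Hxu *ᵥ u + fx) ⬝ᵥ dx + (Hxuᵀ *ᵥ x + Hu *ᵥ u + fu) ⬝ᵥ du)
      + ε ^ 2 * (((1:ℝ)/2) * (dx ⬝ᵥ (Hx *ᵥ dx) + 2 * (dx ⬝ᵥ (Hxu *ᵥ du)) + du ⬝ᵥ (Hu *ᵥ du))) := by
  have e1 : dx ⬝ᵥ (Hx *ᵥ x) = x ⬝ᵥ (Hx *ᵥ dx) := dot_sym hx dx x
  have e2 : du ⬝ᵥ (Hu *ᵥ u) = u ⬝ᵥ (Hu *ᵥ du) := dot_sym hu du u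
  have e3 : (Hx *ᵥ x) ⬝ᵥ dx = x ⬝ᵥ (Hx *ᵥ dx) := by rw [dotProduct_comm]; exact dot_sym hx dx x
  have e4 : (Hxu *ᵥ u) ⬝ᵥ dx = dx ⬝ᵥ (Hxu *ᵥ u) := dotProduct_comm _ _
  have e5 : (Hu *ᵥ u) ⬝ᵥ du = u ⬝ᵥ (Hu *ᵥ du) := by rw [dotProduct_comm]; exact dot_sym hu du u
  have e6 : (Hxuᵀ *ᵥ x) ⬝ᵥ du = x ⬝ᵥ (Hxu *ᵥ du) := (dot_trans Hxu x du).symm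
  simp only [mulVec_add, mulVec_smul, dotProduct_add, add_dotProduct, dotProduct_smul,
    smul_dotProduct, smul_eq_mul]
  rw [e1, e2, e3, e4, e5, e6]
  ring

lemma term_expand {n : ℕ} (M : Matrix (Fin n) (Fin n) ℝ) (h : Mᵀ = M)
    (f x dx : Fin n → ℝ) (ε : ℝ) :
    ((1:ℝ)/2) * ((x + ε • dx) ⬝ᵥ (M *ᵥ (x + ε • dx))) + f ⬝ᵥ (x + ε • dx)
    = (((1:ℝ)/2) * (x ⬝ᵥ (M *ᵥ x)) + f ⬝ᵥ x)
      + ε * ((M *ᵥ x + f) ⬝ᵥ dx)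
      + ε ^ 2 * (((1:ℝ)/2) * (dx ⬝ᵥ (M *ᵥ dx))) := by
  have e1 : dx ⬝ᵥ (M *ᵥ x) = x ⬝ᵥ (M *ᵥ dx) := dot_sym h dx x
  have e3 : (M *ᵥ x) ⬝ᵥ dx = x ⬝ᵥ (M *ᵥ dx) := by rw [dotProduct_comm]; exact dot_sym h dx x
  simp only [mulVec_add, mulVec_smul, dotProduct_add, add_dotProduct, dotProduct_smul,
    smul_dotProduct, smul_eq_mul]
  rw [e1, e3]
  ring

lemma double_sum_single {M i t : ℕ} {Ni : ℕ → ℕ} (hi : i < M) (ht : t < Ni i)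
    (F : ℕ → ℕ → ℝ) (hF : ∀ i' t', ¬(i' = i ∧ t' = t) → F i' t' = 0) :
    ∑ i' ∈ Finset.range M, ∑ t' ∈ Finset.range (Ni i'), F i' t' = F i t := by
  rw [Finset.sum_eq_single i]
  · rw [Finset.sum_eq_single t]
    · intro b _ hb; exact hF i b (by tauto)
    · intro h; exact absurd (Finset.mem_range.mpr ht) h
  · intro b _ hb; exact Finset.sum_eq_zero fun t' _ => hF b t' (by tauto)
  · intro h; exact absurd (Finset.mem_range.mpr hi) h

section SplitMPC

variable (p nx : ℕ) (Ni : ℕ → ℕ) (nu nd : ℕ → ℕ)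
  (Hx : ℕ → ℕ → Matrix (Fin nx) (Fin nx) ℝ)
  (Hxu : (i : ℕ) → ℕ → Matrix (Fin nx) (Fin (nu i)) ℝ)
  (Hu : (i : ℕ) → ℕ → Matrix (Fin (nu i)) (Fin (nu i)) ℝ)
  (fx : ℕ → ℕ → Fin nx → ℝ)
  (fu : (i : ℕ) → ℕ → Fin (nu i) → ℝ)
  (A : ℕ → ℕ → Matrix (Fin nx) (Fin nx) ℝ)
  (B : (i : ℕ) → ℕ → Matrix (Fin nx) (Fin (nu i)) ℝ)
  (a : ℕ → ℕ → Fin nx → ℝ)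
  (HNp : Matrix (Fin nx) (Fin nx) ℝ) (fNp : Fin nx → ℝ)
  (Ac : ℕ → Matrix (Fin nx) (Fin nx) ℝ)
  (Tc : (i : ℕ) → Matrix (Fin nx) (Fin (nd i)) ℝ)
  (ac : ℕ → Fin nx → ℝ)
  (xbarInit : Fin nx → ℝ)

/-- Feasibility for the extended split MPC problem: initial condition on `x̄_0`,
initial constraints `x_{0,i} = x̄_i`, segment dynamics, terminal constraints
`x_{N_i,i} = A_{c,i} x̄_i + T_{c,i} d̄_i + a_{c,i}` (for `i < p`), and the coupling
constraints `x̄_{i+1} = A_{c,i} x̄_i + T_{c,i} d̄_i + a_{c,i}`. -/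
def SplitFeasible (x : ℕ → ℕ → Fin nx → ℝ) (u : (i : ℕ) → ℕ → Fin (nu i) → ℝ)
    (xb : ℕ → Fin nx → ℝ) (db : (i : ℕ) → Fin (nd i) → ℝ) : Prop :=
  xb 0 = xbarInit ∧
  (∀ i ≤ p, x i 0 = xb i) ∧
  (∀ i ≤ p, ∀ t < Ni i,
    x i (t + 1) = A i t *ᵥ x i t + B i t *ᵥ u i t + a i t) ∧
  (∀ i < p, x i (Ni i) = Ac i *ᵥ xb i + Tc i *ᵥ db i + ac i) ∧
  (∀ i < p, xb (i + 1) = Ac i *ᵥ xb i + Tc i *ᵥ db i + ac i)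

/-- Objective of the extended split MPC problem. -/
noncomputable def SplitCost (x : ℕ → ℕ → Fin nx → ℝ) (u : (i : ℕ) → ℕ → Fin (nu i) → ℝ) : ℝ :=
  (∑ i ∈ Finset.range (p + 1), ∑ t ∈ Finset.range (Ni i),
    (((1 : ℝ) / 2) * ((x i t) ⬝ᵥ (Hx i t *ᵥ x i t)
        + 2 * ((x i t) ⬝ᵥ (Hxu i t *ᵥ u i t))
        + (u i t) ⬝ᵥ (Hu i t *ᵥ u i t))
      + fx i t ⬝ᵥ x i t + fu i t ⬝ᵥ u i t))
  + ((1 : ℝ) / 2) * ((x p (Ni p)) ⬝ᵥ (HNp *ᵥ x p (Ni p))) + fNp ⬝ᵥ (x p (Ni p))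

/-- The primal direction space. -/
abbrev PrimalV : Type :=
  (ℕ → ℕ → Fin nx → ℝ) × ((i : ℕ) → ℕ → Fin (nu i) → ℝ) ×
  (ℕ → Fin nx → ℝ) × ((i : ℕ) → Fin (nd i) → ℝ)

/-- The constraint-row space. -/
abbrev RowW : Type :=
  (Fin nx → ℝ) × (ℕ → Fin nx → ℝ) × (ℕ → ℕ → Fin nx → ℝ) ×
  (ℕ → Fin nx → ℝ) × (ℕ → Fin nx → ℝ)

/-- The linearized constraint map. -/
noncomputable def Cmap : PrimalV nx nu nd →ₗ[ℝ] RowW nx where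
  toFun d :=
    ( d.2.2.1 0,
      fun i => if i ≤ p then d.1 i 0 - d.2.2.1 i else 0,
      fun i t => if i ≤ p ∧ t < Ni i then
        d.1 i (t+1) - A i t *ᵥ d.1 i t - B i t *ᵥ d.2.1 i t else 0,
      fun i => if i < p then d.1 i (Ni i) - Ac i *ᵥ d.2.2.1 i - Tc i *ᵥ d.2.2.2 i else 0,
      fun i => if i < p then d.2.2.1 (i+1) - Ac i *ᵥ d.2.2.1 i - Tc i *ᵥ d.2.2.2 i else 0 )
  map_add' d e := by
    refine Prod.ext rfl (Prod.ext ?_ (Prod.ext ?_ (Prod.ext ?_ ?_)))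
    · funext i
      simp only [Prod.fst_add, Prod.snd_add, Pi.add_apply]
      split_ifs <;> (try simp only [mulVec_add]) <;> abel
    · funext i t
      simp only [Prod.fst_add, Prod.snd_add, Pi.add_apply]
      split_ifs <;> (try simp only [mulVec_add]) <;> abel
    · funext i
      simp only [Prod.fst_add, Prod.snd_add, Pi.add_apply]
      split_ifs <;> (try simp only [mulVec_add]) <;> abel
    · funext i
      simp only [Prod.fst_add, Prod.snd_add, Pi.add_apply]
      split_ifs <;> (try simp only [mulVec_add]) <;> abel
  map_smul' c d := by
    refine Prod.ext rfl (Prod.ext ?_ (Prod.ext ?_ (Prod.ext ?_ ?_)))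
    · funext i
      simp only [Prod.smul_fst, Prod.smul_snd, Pi.smul_apply, RingHom.id_apply,
        smul_ite, smul_zero, smul_sub, mulVec_smul]
    · funext i t
      simp only [Prod.smul_fst, Prod.smul_snd, Pi.smul_apply, RingHom.id_apply,
        smul_ite, smul_zero, smul_sub, mulVec_smul]
    · funext i
      simp only [Prod.smul_fst, Prod.smul_snd, Pi.smul_apply, RingHom.id_apply,
        smul_ite, smul_zero, smul_sub, mulVec_smul]
    · funext i
      simp only [Prod.smul_fst, Prod.smul_snd, Pi.smul_apply, RingHom.id_apply,
        smul_ite, smul_zero, smul_sub, mulVec_smul]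

/-- The gradient functional of the cost at `(x, u)`. -/
noncomputable def Gmap (x : ℕ → ℕ → Fin nx → ℝ) (u : (i : ℕ) → ℕ → Fin (nu i) → ℝ) :
    PrimalV nx nu nd →ₗ[ℝ] ℝ where
  toFun d :=
    (∑ i ∈ Finset.range (p + 1), ∑ t ∈ Finset.range (Ni i),
      ((Hx i t *ᵥ x i t + Hxu i t *ᵥ u i t + fx i t) ⬝ᵥ d.1 i t
        + ((Hxu i t)ᵀ *ᵥ x i t + Hu i t *ᵥ u i t + fu i t) ⬝ᵥ d.2.1 i t))
    + (HNp *ᵥ x p (Ni p) + fNp) ⬝ᵥ d.1 p (Ni p)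
  map_add' d e := by
    simp only [Prod.fst_add, Prod.snd_add, Pi.add_apply, dotProduct_add,
      Finset.sum_add_distrib]
    ring
  map_smul' c d := by
    simp only [Prod.smul_fst, Prod.smul_snd, Pi.smul_apply, dotProduct_smul,
      smul_eq_mul, RingHom.id_apply, ← mul_add, ← Finset.mul_sum]

/-- The quadratic form of the cost. -/
noncomputable def Qval (d : PrimalV nx nu nd) : ℝ :=
  (∑ i ∈ Finset.range (p + 1), ∑ t ∈ Finset.range (Ni i),
    ((1:ℝ)/2) * ((d.1 i t) ⬝ᵥ (Hx i t *ᵥ d.1 i t)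
      + 2 * ((d.1 i t) ⬝ᵥ (Hxu i t *ᵥ d.2.1 i t))
      + (d.2.1 i t) ⬝ᵥ (Hu i t *ᵥ d.2.1 i t)))
  + ((1:ℝ)/2) * ((d.1 p (Ni p)) ⬝ᵥ (HNp *ᵥ d.1 p (Ni p)))

/-- Row embeddings. -/
noncomputable def Emb1 : (Fin nx → ℝ) →ₗ[ℝ] RowW nx where
  toFun v := (v, 0, 0, 0, 0)
  map_add' v w := by refine Prod.ext rfl ?_; simp
  map_smul' c v := by refine Prod.ext rfl ?_; simp

noncomputable def Emb2 (i : ℕ) : (Fin nx → ℝ) →ₗ[ℝ] RowW nx where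
  toFun v := (0, fun i' => if i' = i then v else 0, 0, 0, 0)
  map_add' v w := by
    refine Prod.ext (by simp) (Prod.ext ?_ (by simp))
    funext i'; simp only [Prod.fst_add, Prod.snd_add, Pi.add_apply]; rw [ite_add_ite, add_zero]
  map_smul' c v := by
    refine Prod.ext (by simp) (Prod.ext ?_ (by simp))
    funext i'; simp only [Prod.smul_fst, Prod.smul_snd, Pi.smul_apply, RingHom.id_apply, smul_ite, smul_zero]

noncomputable def Emb3 (i t : ℕ) : (Fin nx → ℝ) →ₗ[ℝ] RowW nx where
  toFun v := (0, 0, fun i' t' => if i' = i ∧ t' = t then v else 0, 0, 0)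
  map_add' v w := by
    refine Prod.ext (by simp) (Prod.ext (by simp) (Prod.ext ?_ (by simp)))
    funext i' t'; simp only [Prod.fst_add, Prod.snd_add, Pi.add_apply]; rw [ite_add_ite, add_zero]
  map_smul' c v := by
    refine Prod.ext (by simp) (Prod.ext (by simp) (Prod.ext ?_ (by simp)))
    funext i' t'; simp only [Prod.smul_fst, Prod.smul_snd, Pi.smul_apply, RingHom.id_apply, smul_ite, smul_zero]

noncomputable def Emb4 (i : ℕ) : (Fin nx → ℝ) →ₗ[ℝ] RowW nx where
  toFun v := (0, 0, 0, fun i' => if i' = i then v else 0, 0)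
  map_add' v w := by
    refine Prod.ext (by simp) (Prod.ext (by simp) (Prod.ext (by simp) (Prod.ext ?_ (by simp))))
    funext i'; simp only [Prod.fst_add, Prod.snd_add, Pi.add_apply]; rw [ite_add_ite, add_zero]
  map_smul' c v := by
    refine Prod.ext (by simp) (Prod.ext (by simp) (Prod.ext (by simp) (Prod.ext ?_ (by simp))))
    funext i'; simp only [Prod.smul_fst, Prod.smul_snd, Pi.smul_apply, RingHom.id_apply, smul_ite, smul_zero]

noncomputable def Emb5 (i : ℕ) : (Fin nx → ℝ) →ₗ[ℝ] RowW nx where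
  toFun v := (0, 0, 0, 0, fun i' => if i' = i then v else 0)
  map_add' v w := by
    refine Prod.ext (by simp) (Prod.ext (by simp) (Prod.ext (by simp) (Prod.ext (by simp) ?_)))
    funext i'; simp only [Prod.fst_add, Prod.snd_add, Pi.add_apply]; rw [ite_add_ite, add_zero]
  map_smul' c v := by
    refine Prod.ext (by simp) (Prod.ext (by simp) (Prod.ext (by simp) (Prod.ext (by simp) ?_)))
    funext i'; simp only [Prod.smul_fst, Prod.smul_snd, Pi.smul_apply, RingHom.id_apply, smul_ite, smul_zero]

/-! ### Evaluation of the constraint map at elementary directions -/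

lemma Cmap_dX0 (i : ℕ) (hi : i ≤ p) (h0 : 0 < Ni i) (v : Fin nx → ℝ) :
    Cmap p nx Ni nu nd A B Ac Tc ((fun i' t' => if i' = i ∧ t' = 0 then v else 0), 0, 0, 0)
      = Emb2 nx i v - Emb3 nx i 0 (A i 0 *ᵥ v) := by
  simp only [Cmap, Emb2, Emb3, LinearMap.coe_mk, AddHom.coe_mk]
  refine Prod.ext ?_ (Prod.ext ?_ (Prod.ext ?_ (Prod.ext ?_ ?_))) <;>
    simp only [Prod.fst_sub, Prod.snd_sub, Pi.sub_apply, Pi.zero_apply] <;>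
    [skip; funext i'; funext i' t'; funext i'; funext i'] <;>
    (try simp only [Pi.sub_apply, Pi.zero_apply]) <;>
    (try split_ifs) <;>
    (try simp_all [mulVec_zero]) <;> (try (exfalso; omega)) <;> (try omega) <;> (try (rename_i hcc; exact absurd (hcc.1 ▸ hcc.2) (by omega)))

lemma Cmap_dXs (i s : ℕ) (hi : i ≤ p) (hs : s + 1 < Ni i) (v : Fin nx → ℝ) :
    Cmap p nx Ni nu nd A B Ac Tc ((fun i' t' => if i' = i ∧ t' = s + 1 then v else 0), 0, 0, 0)
      = Emb3 nx i s v - Emb3 nx i (s + 1) (A i (s + 1) *ᵥ v) := by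
  simp only [Cmap, Emb3, LinearMap.coe_mk, AddHom.coe_mk]
  refine Prod.ext ?_ (Prod.ext ?_ (Prod.ext ?_ (Prod.ext ?_ ?_))) <;>
    simp only [Prod.fst_sub, Prod.snd_sub, Pi.sub_apply, Pi.zero_apply] <;>
    [skip; funext i'; funext i' t'; funext i'; funext i'] <;>
    (try simp only [Pi.sub_apply, Pi.zero_apply]) <;>
    (try split_ifs) <;>
    (try simp_all [mulVec_zero]) <;> (try (exfalso; omega)) <;> (try omega) <;> (try (rename_i hcc; exact absurd (hcc.1 ▸ hcc.2) (by omega)))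

lemma Cmap_dXN (i s : ℕ) (hi : i < p) (hNis : Ni i = s + 1) (v : Fin nx → ℝ) :
    Cmap p nx Ni nu nd A B Ac Tc ((fun i' t' => if i' = i ∧ t' = s + 1 then v else 0), 0, 0, 0)
      = Emb3 nx i s v + Emb4 nx i v := by
  simp only [Cmap, Emb3, Emb4, LinearMap.coe_mk, AddHom.coe_mk]
  refine Prod.ext ?_ (Prod.ext ?_ (Prod.ext ?_ (Prod.ext ?_ ?_))) <;>
    simp only [Prod.fst_add, Prod.snd_add, Pi.add_apply, Pi.zero_apply] <;>
    [skip; funext i'; funext i' t'; funext i'; funext i'] <;>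
    (try simp only [Pi.add_apply, Pi.zero_apply]) <;>
    (try split_ifs) <;>
    (try simp_all [mulVec_zero]) <;> (try (exfalso; omega)) <;> (try omega) <;> (try (rename_i hcc; exact absurd (hcc.1 ▸ hcc.2) (by omega)))

lemma Cmap_dXNp (s : ℕ) (hNs : Ni p = s + 1) (v : Fin nx → ℝ) :
    Cmap p nx Ni nu nd A B Ac Tc ((fun i' t' => if i' = p ∧ t' = s + 1 then v else 0), 0, 0, 0)
      = Emb3 nx p s v := by
  simp only [Cmap, Emb3, LinearMap.coe_mk, AddHom.coe_mk]
  refine Prod.ext ?_ (Prod.ext ?_ (Prod.ext ?_ (Prod.ext ?_ ?_))) <;>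
    [skip; funext i'; funext i' t'; funext i'; funext i'] <;>
    (try simp only [Pi.zero_apply]) <;>
    (try split_ifs) <;>
    (try simp_all [mulVec_zero]) <;> (try (exfalso; omega)) <;> (try omega) <;> (try (rename_i hcc; exact absurd (hcc.1 ▸ hcc.2) (by omega)))

lemma Cmap_dU (i t : ℕ) (hi : i ≤ p) (ht : t < Ni i) (w : Fin (nu i) → ℝ) :
    Cmap p nx Ni nu nd A B Ac Tc
      (0, Function.update (fun i' => (0 : ℕ → Fin (nu i') → ℝ)) i
            (fun t' => if t' = t then w else 0), 0, 0)
      = -(Emb3 nx i t (B i t *ᵥ w)) := by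
  simp only [Cmap, Emb3, LinearMap.coe_mk, AddHom.coe_mk]
  refine Prod.ext ?_ (Prod.ext ?_ (Prod.ext ?_ (Prod.ext ?_ ?_))) <;>
    simp only [Prod.fst_neg, Prod.snd_neg, Pi.neg_apply, Pi.zero_apply] <;>
    [skip; funext i'; funext i' t'; funext i'; funext i'] <;>
    (try simp only [Pi.neg_apply, Pi.zero_apply])
  · simp
  · simp
  · by_cases h : i' = i
    · subst h
      simp only [Function.update_self]
      (try split_ifs) <;> (try simp_all [mulVec_zero]) <;> (try (exfalso; omega)) <;> (try omega) <;> (try (rename_i hcc; exact absurd (hcc.1 ▸ hcc.2) (by omega)))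
    · rw [Function.update_of_ne h]
      (try split_ifs) <;> (try simp_all [mulVec_zero]) <;> (try (exfalso; omega)) <;> (try omega) <;> (try (rename_i hcc; exact absurd (hcc.1 ▸ hcc.2) (by omega)))
  · split_ifs <;> simp [mulVec_zero]
  · split_ifs <;> simp [mulVec_zero]

lemma Cmap_dXb0 (h0 : 0 < p) (v : Fin nx → ℝ) :
    Cmap p nx Ni nu nd A B Ac Tc (0, 0, (fun i' => if i' = 0 then v else 0), 0)
      = Emb1 nx v - Emb2 nx 0 v - Emb4 nx 0 (Ac 0 *ᵥ v) - Emb5 nx 0 (Ac 0 *ᵥ v) := by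
  simp only [Cmap, Emb1, Emb2, Emb4, Emb5, LinearMap.coe_mk, AddHom.coe_mk]
  refine Prod.ext ?_ (Prod.ext ?_ (Prod.ext ?_ (Prod.ext ?_ ?_))) <;>
    simp only [Prod.fst_sub, Prod.snd_sub, Pi.sub_apply, Pi.zero_apply] <;>
    [skip; funext i'; funext i' t'; funext i'; funext i'] <;>
    (try simp only [Pi.sub_apply, Pi.zero_apply]) <;>
    (try split_ifs) <;>
    (try simp_all [mulVec_zero]) <;> (try (exfalso; omega)) <;> (try omega) <;> (try (rename_i hcc; exact absurd (hcc.1 ▸ hcc.2) (by omega)))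

lemma Cmap_dXbj (j : ℕ) (hj : j + 1 < p) (v : Fin nx → ℝ) :
    Cmap p nx Ni nu nd A B Ac Tc (0, 0, (fun i' => if i' = j + 1 then v else 0), 0)
      = Emb5 nx j v - Emb2 nx (j + 1) v - Emb4 nx (j + 1) (Ac (j + 1) *ᵥ v)
        - Emb5 nx (j + 1) (Ac (j + 1) *ᵥ v) := by
  simp only [Cmap, Emb2, Emb4, Emb5, LinearMap.coe_mk, AddHom.coe_mk]
  refine Prod.ext ?_ (Prod.ext ?_ (Prod.ext ?_ (Prod.ext ?_ ?_))) <;>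
    simp only [Prod.fst_sub, Prod.snd_sub, Pi.sub_apply, Pi.zero_apply] <;>
    [skip; funext i'; funext i' t'; funext i'; funext i'] <;>
    (try simp only [Pi.sub_apply, Pi.zero_apply]) <;>
    (try split_ifs) <;>
    (try simp_all [mulVec_zero]) <;> (try (exfalso; omega)) <;> (try omega) <;> (try (rename_i hcc; exact absurd (hcc.1 ▸ hcc.2) (by omega)))

lemma Cmap_dXbp (j : ℕ) (hpj : p = j + 1) (v : Fin nx → ℝ) :
    Cmap p nx Ni nu nd A B Ac Tc (0, 0, (fun i' => if i' = p then v else 0), 0)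
      = Emb5 nx j v - Emb2 nx p v := by
  simp only [Cmap, Emb2, Emb5, LinearMap.coe_mk, AddHom.coe_mk]
  refine Prod.ext ?_ (Prod.ext ?_ (Prod.ext ?_ (Prod.ext ?_ ?_))) <;>
    simp only [Prod.fst_sub, Prod.snd_sub, Pi.sub_apply, Pi.zero_apply] <;>
    [skip; funext i'; funext i' t'; funext i'; funext i'] <;>
    (try simp only [Pi.sub_apply, Pi.zero_apply]) <;>
    (try split_ifs) <;>
    (try simp_all [mulVec_zero]) <;> (try (exfalso; omega)) <;> (try omega) <;> (try (rename_i hcc; exact absurd (hcc.1 ▸ hcc.2) (by omega)))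

lemma Cmap_dDb (i : ℕ) (hi : i < p) (w : Fin (nd i) → ℝ) :
    Cmap p nx Ni nu nd A B Ac Tc
      (0, 0, 0, Function.update (fun i' => (0 : Fin (nd i') → ℝ)) i w)
      = -(Emb4 nx i (Tc i *ᵥ w)) - Emb5 nx i (Tc i *ᵥ w) := by
  simp only [Cmap, Emb4, Emb5, LinearMap.coe_mk, AddHom.coe_mk]
  refine Prod.ext ?_ (Prod.ext ?_ (Prod.ext ?_ (Prod.ext ?_ ?_))) <;>
    simp only [Prod.fst_sub, Prod.snd_sub, Prod.fst_neg, Prod.snd_neg, Pi.sub_apply,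
      Pi.neg_apply, Pi.zero_apply] <;>
    [skip; funext i'; funext i' t'; funext i'; funext i'] <;>
    (try simp only [Pi.sub_apply, Pi.neg_apply, Pi.zero_apply])
  · simp
  · simp
  · split_ifs <;> simp [mulVec_zero]
  · by_cases h : i' = i
    · subst h
      simp only [Function.update_self]
      (try split_ifs) <;> (try simp_all [mulVec_zero]) <;> (try (exfalso; omega)) <;> (try omega) <;> (try (rename_i hcc; exact absurd (hcc.1 ▸ hcc.2) (by omega)))
    · rw [Function.update_of_ne h]
      (try split_ifs) <;> (try simp_all [mulVec_zero]) <;> (try (exfalso; omega)) <;> (try omega) <;> (try (rename_i hcc; exact absurd (hcc.1 ▸ hcc.2) (by omega)))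
  · by_cases h : i' = i
    · subst h
      simp only [Function.update_self]
      (try split_ifs) <;> (try simp_all [mulVec_zero]) <;> (try (exfalso; omega)) <;> (try omega) <;> (try (rename_i hcc; exact absurd (hcc.1 ▸ hcc.2) (by omega)))
    · rw [Function.update_of_ne h]
      (try split_ifs) <;> (try simp_all [mulVec_zero]) <;> (try (exfalso; omega)) <;> (try omega) <;> (try (rename_i hcc; exact absurd (hcc.1 ▸ hcc.2) (by omega)))

/-! ### Evaluation of the gradient at elementary directions -/

lemma Gmap_dX (x : ℕ → ℕ → Fin nx → ℝ) (u : (i : ℕ) → ℕ → Fin (nu i) → ℝ)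
    (i t : ℕ) (hip : i < p + 1) (v : Fin nx → ℝ) :
    Gmap p nx Ni nu nd Hx Hxu Hu fx fu HNp fNp x u
      ((fun i' t' => if i' = i ∧ t' = t then v else 0), 0, 0, 0)
      = (if t < Ni i then (Hx i t *ᵥ x i t + Hxu i t *ᵥ u i t + fx i t) ⬝ᵥ v else 0)
        + (if i = p ∧ t = Ni p then (HNp *ᵥ x p (Ni p) + fNp) ⬝ᵥ v else 0) := by
  simp only [Gmap, LinearMap.coe_mk, AddHom.coe_mk, Pi.zero_apply, dotProduct_zero, add_zero]
  congr 1
  · by_cases ht : t < Ni i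
    · rw [double_sum_single hip ht
        (fun i' t' => (Hx i' t' *ᵥ x i' t' + Hxu i' t' *ᵥ u i' t' + fx i' t')
          ⬝ᵥ (if i' = i ∧ t' = t then v else 0))
        (fun i' t' h => by simp [h])]
      rw [if_pos ht, if_pos ⟨rfl, rfl⟩]
    · rw [if_neg ht]
      refine Finset.sum_eq_zero fun i' hi' => Finset.sum_eq_zero fun t' ht' => ?_
      rw [if_neg, dotProduct_zero]
      rintro ⟨rfl, rfl⟩
      exact ht (Finset.mem_range.mp ht')
  · by_cases h : i = p ∧ t = Ni p
    · obtain ⟨h1, h2⟩ := h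
      subst h1; subst h2
      simp
    · rw [if_neg h, if_neg, dotProduct_zero]
      rintro ⟨rfl, rfl⟩
      exact h ⟨rfl, rfl⟩

lemma Gmap_dU (x : ℕ → ℕ → Fin nx → ℝ) (u : (i : ℕ) → ℕ → Fin (nu i) → ℝ)
    (i t : ℕ) (hip : i < p + 1) (ht : t < Ni i) (w : Fin (nu i) → ℝ) :
    Gmap p nx Ni nu nd Hx Hxu Hu fx fu HNp fNp x u
      (0, Function.update (fun i' => (0 : ℕ → Fin (nu i') → ℝ)) i
            (fun t' => if t' = t then w else 0), 0, 0)
      = ((Hxu i t)ᵀ *ᵥ x i t + Hu i t *ᵥ u i t + fu i t) ⬝ᵥ w := by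
  simp only [Gmap, LinearMap.coe_mk, AddHom.coe_mk, Pi.zero_apply, dotProduct_zero,
    add_zero, zero_add]
  rw [double_sum_single hip ht
      (fun i' t' => ((Hxu i' t')ᵀ *ᵥ x i' t' + Hu i' t' *ᵥ u i' t' + fu i' t')
        ⬝ᵥ (Function.update (fun i'' => (0 : ℕ → Fin (nu i'') → ℝ)) i
            (fun t' => if t' = t then w else 0) i' t'))]
  · rw [Function.update_self, if_pos rfl]
  · intro i' t' h
    by_cases hii : i' = i
    · subst hii
      rw [Function.update_self, if_neg (by tauto), dotProduct_zero]
    · rw [Function.update_of_ne hii]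
      simp

lemma Gmap_dO (x : ℕ → ℕ → Fin nx → ℝ) (u : (i : ℕ) → ℕ → Fin (nu i) → ℝ)
    (d3 : ℕ → Fin nx → ℝ) (d4 : (i : ℕ) → Fin (nd i) → ℝ) :
    Gmap p nx Ni nu nd Hx Hxu Hu fx fu HNp fNp x u (0, 0, d3, d4) = 0 := by
  simp [Gmap]

/-! ### Cost expansion and consequences of optimality -/

lemma cost_expand
    (hHsym : ∀ i ≤ p, ∀ t < Ni i, (Hx i t)ᵀ = Hx i t ∧ (Hu i t)ᵀ = Hu i t)
    (hHN : HNpᵀ = HNp)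
    (x : ℕ → ℕ → Fin nx → ℝ) (u : (i : ℕ) → ℕ → Fin (nu i) → ℝ)
    (d : PrimalV nx nu nd) (ε : ℝ) :
    SplitCost p nx Ni nu Hx Hxu Hu fx fu HNp fNp
        (fun i t => x i t + ε • d.1 i t) (fun i t => u i t + ε • d.2.1 i t)
      = SplitCost p nx Ni nu Hx Hxu Hu fx fu HNp fNp x u
        + ε * Gmap p nx Ni nu nd Hx Hxu Hu fx fu HNp fNp x u d
        + ε ^ 2 * Qval p nx Ni nu nd Hx Hxu Hu HNp d := by
  simp only [SplitCost, Gmap, Qval, LinearMap.coe_mk, AddHom.coe_mk]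
  have hsum :
      (∑ i ∈ Finset.range (p + 1), ∑ t ∈ Finset.range (Ni i),
        (((1 : ℝ) / 2) * ((x i t + ε • d.1 i t) ⬝ᵥ (Hx i t *ᵥ (x i t + ε • d.1 i t))
            + 2 * ((x i t + ε • d.1 i t) ⬝ᵥ (Hxu i t *ᵥ (u i t + ε • d.2.1 i t)))
            + (u i t + ε • d.2.1 i t) ⬝ᵥ (Hu i t *ᵥ (u i t + ε • d.2.1 i t)))
          + fx i t ⬝ᵥ (x i t + ε • d.1 i t) + fu i t ⬝ᵥ (u i t + ε • d.2.1 i t)))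
      = (∑ i ∈ Finset.range (p + 1), ∑ t ∈ Finset.range (Ni i),
          (((1 : ℝ) / 2) * ((x i t) ⬝ᵥ (Hx i t *ᵥ x i t)
              + 2 * ((x i t) ⬝ᵥ (Hxu i t *ᵥ u i t))
              + (u i t) ⬝ᵥ (Hu i t *ᵥ u i t))
            + fx i t ⬝ᵥ x i t + fu i t ⬝ᵥ u i t))
        + ε * (∑ i ∈ Finset.range (p + 1), ∑ t ∈ Finset.range (Ni i),
            ((Hx i t *ᵥ x i t + Hxu i t *ᵥ u i t + fx i t) ⬝ᵥ d.1 i t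
              + ((Hxu i t)ᵀ *ᵥ x i t + Hu i t *ᵥ u i t + fu i t) ⬝ᵥ d.2.1 i t))
        + ε ^ 2 * (∑ i ∈ Finset.range (p + 1), ∑ t ∈ Finset.range (Ni i),
            ((1:ℝ)/2) * ((d.1 i t) ⬝ᵥ (Hx i t *ᵥ d.1 i t)
              + 2 * ((d.1 i t) ⬝ᵥ (Hxu i t *ᵥ d.2.1 i t))
              + (d.2.1 i t) ⬝ᵥ (Hu i t *ᵥ d.2.1 i t))) := by
    rw [Finset.sum_congr rfl (fun i hi => Finset.sum_congr rfl (fun t ht =>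
      stage_expand (Hx i t) (Hxu i t) (Hu i t)
        (hHsym i (Nat.lt_succ_iff.mp (Finset.mem_range.mp hi)) t (Finset.mem_range.mp ht)).1
        (hHsym i (Nat.lt_succ_iff.mp (Finset.mem_range.mp hi)) t (Finset.mem_range.mp ht)).2
        (fx i t) (fu i t) (x i t) (d.1 i t) (u i t) (d.2.1 i t) ε))]
    simp only [Finset.sum_add_distrib, ← Finset.mul_sum]
  have htail := term_expand HNp hHN fNp (x p (Ni p)) (d.1 p (Ni p)) ε
  linear_combination hsum + htail

lemma Qval_nonneg
    (hHpsd : ∀ i ≤ p, ∀ t < Ni i, ∀ (v : Fin nx → ℝ) (w : Fin (nu i) → ℝ),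
      0 ≤ v ⬝ᵥ (Hx i t *ᵥ v) + 2 * (v ⬝ᵥ (Hxu i t *ᵥ w)) + w ⬝ᵥ (Hu i t *ᵥ w))
    (hHN : HNp.PosSemidef) (d : PrimalV nx nu nd) :
    0 ≤ Qval p nx Ni nu nd Hx Hxu Hu HNp d := by
  unfold Qval
  have h2 := hHN.dotProduct_mulVec_nonneg (d.1 p (Ni p))
  rw [star_trivial] at h2
  have h1 : (0:ℝ) ≤ ∑ i ∈ Finset.range (p + 1), ∑ t ∈ Finset.range (Ni i),
      ((1:ℝ)/2) * ((d.1 i t) ⬝ᵥ (Hx i t *ᵥ d.1 i t)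
        + 2 * ((d.1 i t) ⬝ᵥ (Hxu i t *ᵥ d.2.1 i t))
        + (d.2.1 i t) ⬝ᵥ (Hu i t *ᵥ d.2.1 i t)) := by
    refine Finset.sum_nonneg fun i hi => Finset.sum_nonneg fun t ht => ?_
    have := hHpsd i (Nat.lt_succ_iff.mp (Finset.mem_range.mp hi)) t (Finset.mem_range.mp ht) (d.1 i t) (d.2.1 i t)
    linarith
  linarith

lemma ker_feasible (x : ℕ → ℕ → Fin nx → ℝ) (u : (i : ℕ) → ℕ → Fin (nu i) → ℝ)
    (xb : ℕ → Fin nx → ℝ) (db : (i : ℕ) → Fin (nd i) → ℝ)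
    (hfe : SplitFeasible p nx Ni nu nd A B a Ac Tc ac xbarInit x u xb db)
    (d : PrimalV nx nu nd) (hd : Cmap p nx Ni nu nd A B Ac Tc d = 0) (ε : ℝ) :
    SplitFeasible p nx Ni nu nd A B a Ac Tc ac xbarInit
      (fun i t => x i t + ε • d.1 i t) (fun i t => u i t + ε • d.2.1 i t)
      (fun i => xb i + ε • d.2.2.1 i) (fun i => db i + ε • d.2.2.2 i) := by
  obtain ⟨h1, h2, h3, h4, h5⟩ := hfe
  have hc1 : d.2.2.1 0 = 0 := congrArg (fun w => w.1) hd
  have hc2 : ∀ i ≤ p, d.1 i 0 = d.2.2.1 i := by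
    intro i hi
    have := congrFun (congrArg (fun w => w.2.1) hd) i
    simp only [Cmap, LinearMap.coe_mk, AddHom.coe_mk, Prod.fst_zero, Prod.snd_zero,
      Pi.zero_apply, hi, if_true] at this
    rwa [sub_eq_zero] at this
  have hc3 : ∀ i ≤ p, ∀ t < Ni i,
      d.1 i (t+1) = A i t *ᵥ d.1 i t + B i t *ᵥ d.2.1 i t := by
    intro i hi t ht
    have := congrFun (congrFun (congrArg (fun w => w.2.2.1) hd) i) t
    simp only [Cmap, LinearMap.coe_mk, AddHom.coe_mk, Prod.fst_zero, Prod.snd_zero,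
      Pi.zero_apply, hi, ht, and_self, if_true] at this
    rwa [sub_sub, sub_eq_zero] at this
  have hc4 : ∀ i < p, d.1 i (Ni i) = Ac i *ᵥ d.2.2.1 i + Tc i *ᵥ d.2.2.2 i := by
    intro i hi
    have := congrFun (congrArg (fun w => w.2.2.2.1) hd) i
    simp only [Cmap, LinearMap.coe_mk, AddHom.coe_mk, Prod.fst_zero, Prod.snd_zero,
      Pi.zero_apply, hi, if_true] at this
    rwa [sub_sub, sub_eq_zero] at this
  have hc5 : ∀ i < p, d.2.2.1 (i+1) = Ac i *ᵥ d.2.2.1 i + Tc i *ᵥ d.2.2.2 i := by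
    intro i hi
    have := congrFun (congrArg (fun w => w.2.2.2.2) hd) i
    simp only [Cmap, LinearMap.coe_mk, AddHom.coe_mk, Prod.fst_zero, Prod.snd_zero,
      Pi.zero_apply, hi, if_true] at this
    rwa [sub_sub, sub_eq_zero] at this
  refine ⟨?_, ?_, ?_, ?_, ?_⟩
  · show xb 0 + ε • d.2.2.1 0 = xbarInit
    rw [hc1, smul_zero, add_zero]
    exact h1
  · intro i hi
    show x i 0 + ε • d.1 i 0 = xb i + ε • d.2.2.1 i
    rw [h2 i hi, hc2 i hi]
  · intro i hi t ht
    show x i (t+1) + ε • d.1 i (t+1) = _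
    rw [h3 i hi t ht, hc3 i hi t ht]
    simp only [mulVec_add, mulVec_smul, smul_add]
    abel
  · intro i hi
    show x i (Ni i) + ε • d.1 i (Ni i) = _
    rw [h4 i hi, hc4 i hi]
    simp only [mulVec_add, mulVec_smul, smul_add]
    abel
  · intro i hi
    show xb (i+1) + ε • d.2.2.1 (i+1) = _
    rw [h5 i hi, hc5 i hi]
    simp only [mulVec_add, mulVec_smul, smul_add]
    abel

/-- **Relations between dual variables of the subproblems (Theorem 3).**
At an optimal solution of the extended split MPC problem there exist multipliers
`λ_{t,i}`, `λ_{tc,i}` and `λ̂_{-1},…,λ̂_{p-1}` (here `lamhat (i+1)` encodes `λ̂_i`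
and `lamhat 0` encodes `λ̂_{−1}`) satisfying the stage stationarity conditions and
`λ_{0,p} = λ̂_{p−1}`, `λ_{0,i} = λ̂_{i−1} − A_{c,i}ᵀ(λ_{tc,i} + λ̂_i)`,
`T_{c,i}ᵀ(λ_{tc,i} + λ̂_i) = 0`, and `λ_{N_i,i} = −λ_{tc,i}` for `i = 0,…,p−1`. -/
theorem split_mpc_dual_relations
    (hp : 1 ≤ p) (hNi : ∀ i ≤ p, 1 ≤ Ni i)
    (hHsym : ∀ i ≤ p, ∀ t < Ni i, (Hx i t)ᵀ = Hx i t ∧ (Hu i t)ᵀ = Hu i t)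
    (hHpsd : ∀ i ≤ p, ∀ t < Ni i, ∀ (v : Fin nx → ℝ) (w : Fin (nu i) → ℝ),
      0 ≤ v ⬝ᵥ (Hx i t *ᵥ v) + 2 * (v ⬝ᵥ (Hxu i t *ᵥ w)) + w ⬝ᵥ (Hu i t *ᵥ w))
    (hHN : HNp.PosSemidef)
    (x : ℕ → ℕ → Fin nx → ℝ) (u : (i : ℕ) → ℕ → Fin (nu i) → ℝ)
    (xb : ℕ → Fin nx → ℝ) (db : (i : ℕ) → Fin (nd i) → ℝ)
    (hfeas : SplitFeasible p nx Ni nu nd A B a Ac Tc ac xbarInit x u xb db)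
    (hopt : ∀ (x' : ℕ → ℕ → Fin nx → ℝ) (u' : (i : ℕ) → ℕ → Fin (nu i) → ℝ)
      (xb' : ℕ → Fin nx → ℝ) (db' : (i : ℕ) → Fin (nd i) → ℝ),
      SplitFeasible p nx Ni nu nd A B a Ac Tc ac xbarInit x' u' xb' db' →
      SplitCost p nx Ni nu Hx Hxu Hu fx fu HNp fNp x u
        ≤ SplitCost p nx Ni nu Hx Hxu Hu fx fu HNp fNp x' u') :
    ∃ (lam : ℕ → ℕ → Fin nx → ℝ) (lamtc : ℕ → Fin nx → ℝ)
      (lamhat : ℕ → Fin nx → ℝ),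
      (∀ i ≤ p, ∀ t < Ni i,
        Hx i t *ᵥ x i t + Hxu i t *ᵥ u i t + fx i t
          - lam i t + (A i t)ᵀ *ᵥ lam i (t + 1) = 0) ∧
      (∀ i ≤ p, ∀ t < Ni i,
        (Hxu i t)ᵀ *ᵥ x i t + Hu i t *ᵥ u i t + fu i t
          + (B i t)ᵀ *ᵥ lam i (t + 1) = 0) ∧
      (HNp *ᵥ x p (Ni p) + fNp - lam p (Ni p) = 0) ∧
      (lam p 0 = lamhat p) ∧
      (∀ i < p, lam i 0 = lamhat i - (Ac i)ᵀ *ᵥ (lamtc i + lamhat (i + 1))) ∧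
      (∀ i < p, (Tc i)ᵀ *ᵥ (lamtc i + lamhat (i + 1)) = 0) ∧
      (∀ i < p, lam i (Ni i) = -(lamtc i)) := by

  have hT : HNpᵀ = HNp := by
    ext k l
    rw [Matrix.transpose_apply]
    have := congrFun (congrFun hHN.1 k) l
    rwa [Matrix.conjTranspose_apply, star_trivial] at this
  have hvanish : ∀ d, Cmap p nx Ni nu nd A B Ac Tc d = 0 →
      Gmap p nx Ni nu nd Hx Hxu Hu fx fu HNp fNp x u d = 0 := by
    intro d hd
    refine scalar_quad_zero (Qval_nonneg p nx Ni nu nd Hx Hxu Hu HNp hHpsd hHN d)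
      fun ε => ?_
    have hfe := ker_feasible p nx Ni nu nd A B a Ac Tc ac xbarInit x u xb db hfeas d hd ε
    have hle := hopt _ _ _ _ hfe
    rw [cost_expand p nx Ni nu nd Hx Hxu Hu fx fu HNp fNp hHsym hT x u d ε] at hle
    linarith
  obtain ⟨ψ, hψ⟩ := exists_functional_factor (Cmap p nx Ni nu nd A B Ac Tc)
    (Gmap p nx Ni nu nd Hx Hxu Hu fx fu HNp fNp x u) hvanish
  set lam : ℕ → ℕ → Fin nx → ℝ := fun i t =>
    Nat.casesOn t (fun k => ψ (Emb2 nx i (Pi.single k 1)))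
      (fun s k => ψ (Emb3 nx i s (Pi.single k 1))) with hlam
  set lamtc : ℕ → Fin nx → ℝ := fun i k => ψ (Emb4 nx i (Pi.single k 1)) with hlamtc
  set lamhat : ℕ → Fin nx → ℝ := fun j =>
    Nat.casesOn j (fun k => ψ (Emb1 nx (Pi.single k 1)))
      (fun j' k => ψ (Emb5 nx j' (Pi.single k 1))) with hlamhat
  have rep1 : ∀ (w : Fin nx → ℝ), ψ (Emb1 nx w) = lamhat 0 ⬝ᵥ w :=
    fun w => psi_emb_rep ψ (Emb1 nx) w
  have rep2 : ∀ i (w : Fin nx → ℝ), ψ (Emb2 nx i w) = lam i 0 ⬝ᵥ w :=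
    fun i w => psi_emb_rep ψ (Emb2 nx i) w
  have rep3 : ∀ i s (w : Fin nx → ℝ), ψ (Emb3 nx i s w) = lam i (s + 1) ⬝ᵥ w :=
    fun i s w => psi_emb_rep ψ (Emb3 nx i s) w
  have rep4 : ∀ i (w : Fin nx → ℝ), ψ (Emb4 nx i w) = lamtc i ⬝ᵥ w :=
    fun i w => psi_emb_rep ψ (Emb4 nx i) w
  have rep5 : ∀ j (w : Fin nx → ℝ), ψ (Emb5 nx j w) = lamhat (j + 1) ⬝ᵥ w :=
    fun j w => psi_emb_rep ψ (Emb5 nx j) w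
  refine ⟨lam, lamtc, lamhat, ?_, ?_, ?_, ?_, ?_, ?_, ?_⟩
  · -- stage x-stationarity
    intro i hi t ht
    cases t with
    | zero =>
      have key : ∀ v, (Hx i 0 *ᵥ x i 0 + Hxu i 0 *ᵥ u i 0 + fx i 0) ⬝ᵥ v
          = (lam i 0 - (A i 0)ᵀ *ᵥ lam i (0 + 1)) ⬝ᵥ v := by
        intro v
        have h := hψ ((fun i' t' => if i' = i ∧ t' = 0 then v else 0), 0, 0, 0)
        rw [Cmap_dX0 p nx Ni nu nd A B Ac Tc i hi ht v, map_sub, rep2, rep3,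
          Gmap_dX p nx Ni nu nd Hx Hxu Hu fx fu HNp fNp x u i 0 (by omega) v,
          if_pos ht, if_neg (by rintro ⟨-, h0⟩; have := hNi p le_rfl; omega),
          add_zero, dot_trans] at h
        rw [sub_dotProduct]
        linarith
      have hv := dot_cancel key
      rw [hv]
      abel
    | succ s =>
      have key : ∀ v, (Hx i (s+1) *ᵥ x i (s+1) + Hxu i (s+1) *ᵥ u i (s+1) + fx i (s+1)) ⬝ᵥ v
          = (lam i (s+1) - (A i (s+1))ᵀ *ᵥ lam i (s+1+1)) ⬝ᵥ v := by
        intro v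
        have h := hψ ((fun i' t' => if i' = i ∧ t' = s + 1 then v else 0), 0, 0, 0)
        rw [Cmap_dXs p nx Ni nu nd A B Ac Tc i s hi ht v, map_sub, rep3, rep3,
          Gmap_dX p nx Ni nu nd Hx Hxu Hu fx fu HNp fNp x u i (s+1) (by omega) v,
          if_pos ht, if_neg (by rintro ⟨h1, h0⟩; subst h1; omega),
          add_zero, dot_trans] at h
        rw [sub_dotProduct]
        linarith
      have hv := dot_cancel key
      rw [hv]
      abel
  · -- stage u-stationarity
    intro i hi t ht
    have key : ∀ w, ((Hxu i t)ᵀ *ᵥ x i t + Hu i t *ᵥ u i t + fu i t) ⬝ᵥ w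
        = (-((B i t)ᵀ *ᵥ lam i (t + 1))) ⬝ᵥ w := by
      intro w
      have h := hψ (0, Function.update (fun i' => (0 : ℕ → Fin (nu i') → ℝ)) i
        (fun t' => if t' = t then w else 0), 0, 0)
      rw [Cmap_dU p nx Ni nu nd A B Ac Tc i t hi ht w, map_neg, rep3, dot_trans,
        Gmap_dU p nx Ni nu nd Hx Hxu Hu fx fu HNp fNp x u i t (by omega) ht w] at h
      rw [neg_dotProduct]
      linarith
    have hv := dot_cancel key
    rw [hv]
    abel
  · -- terminal stationarity
    obtain ⟨s, hNs⟩ : ∃ s, Ni p = s + 1 := ⟨Ni p - 1, by have := hNi p le_rfl; omega⟩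
    have key : ∀ v, (HNp *ᵥ x p (Ni p) + fNp) ⬝ᵥ v = lam p (s + 1) ⬝ᵥ v := by
      intro v
      have h := hψ ((fun i' t' => if i' = p ∧ t' = s + 1 then v else 0), 0, 0, 0)
      rw [Cmap_dXNp p nx Ni nu nd A B Ac Tc s hNs v, rep3,
        Gmap_dX p nx Ni nu nd Hx Hxu Hu fx fu HNp fNp x u p (s+1) (by omega) v,
        if_neg (by omega), if_pos ⟨rfl, hNs.symm⟩, zero_add] at h
      linarith
    have hv := dot_cancel key
    have hl : lam p (Ni p) = lam p (s + 1) := by rw [hNs]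
    rw [hl, hv, sub_self]
  · -- lam p 0 = lamhat p
    obtain ⟨j, hpj⟩ : ∃ j, p = j + 1 := ⟨p - 1, by omega⟩
    have key : ∀ v, lam p 0 ⬝ᵥ v = lamhat (j + 1) ⬝ᵥ v := by
      intro v
      have h := hψ (0, 0, (fun i' => if i' = p then v else 0), 0)
      rw [Cmap_dXbp p nx Ni nu nd A B Ac Tc j hpj v, map_sub, rep5, rep2,
        Gmap_dO p nx Ni nu nd Hx Hxu Hu fx fu HNp fNp x u _ _] at h
      linarith
    have hv := dot_cancel key
    rw [show lamhat p = lamhat (j + 1) from by rw [hpj]]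
    exact hv
  · -- lam i 0 relation
    intro i hi
    cases i with
    | zero =>
      have key : ∀ v, lam 0 0 ⬝ᵥ v
          = (lamhat 0 - (Ac 0)ᵀ *ᵥ (lamtc 0 + lamhat (0 + 1))) ⬝ᵥ v := by
        intro v
        have h := hψ (0, 0, (fun i' => if i' = 0 then v else 0), 0)
        rw [Cmap_dXb0 p nx Ni nu nd A B Ac Tc hi v, map_sub, map_sub, map_sub,
          rep1, rep2, rep4, rep5, dot_trans, dot_trans,
          Gmap_dO p nx Ni nu nd Hx Hxu Hu fx fu HNp fNp x u _ _] at h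
        rw [sub_dotProduct, mulVec_add, add_dotProduct]
        linarith
      exact dot_cancel key
    | succ j =>
      have key : ∀ v, lam (j + 1) 0 ⬝ᵥ v
          = (lamhat (j + 1) - (Ac (j + 1))ᵀ *ᵥ (lamtc (j + 1) + lamhat (j + 1 + 1))) ⬝ᵥ v := by
        intro v
        have h := hψ (0, 0, (fun i' => if i' = j + 1 then v else 0), 0)
        rw [Cmap_dXbj p nx Ni nu nd A B Ac Tc j hi v, map_sub, map_sub, map_sub,
          rep5, rep2, rep4, rep5, dot_trans, dot_trans,
          Gmap_dO p nx Ni nu nd Hx Hxu Hu fx fu HNp fNp x u _ _] at h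
        rw [sub_dotProduct, mulVec_add, add_dotProduct]
        linarith
      exact dot_cancel key
  · -- Tc relation
    intro i hi
    have key : ∀ w, ((Tc i)ᵀ *ᵥ (lamtc i + lamhat (i + 1))) ⬝ᵥ w
        = (0 : Fin (nd i) → ℝ) ⬝ᵥ w := by
      intro w
      have h := hψ (0, 0, 0, Function.update (fun i' => (0 : Fin (nd i') → ℝ)) i w)
      rw [Cmap_dDb p nx Ni nu nd A B Ac Tc i hi w, map_sub, map_neg, rep4, rep5,
        dot_trans, dot_trans,
        Gmap_dO p nx Ni nu nd Hx Hxu Hu fx fu HNp fNp x u _ _] at h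
      rw [mulVec_add, add_dotProduct, zero_dotProduct]
      linarith
    exact dot_cancel key
  · -- lam i (Ni i) = -lamtc i
    intro i hi
    obtain ⟨s, hNs⟩ : ∃ s, Ni i = s + 1 := ⟨Ni i - 1, by have := hNi i (le_of_lt hi); omega⟩
    have key : ∀ v, lam i (s + 1) ⬝ᵥ v = (-(lamtc i)) ⬝ᵥ v := by
      intro v
      have h := hψ ((fun i' t' => if i' = i ∧ t' = s + 1 then v else 0), 0, 0, 0)
      rw [Cmap_dXN p nx Ni nu nd A B Ac Tc i s hi hNs v, map_add, rep3, rep4,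
        Gmap_dX p nx Ni nu nd Hx Hxu Hu fx fu HNp fNp x u i (s+1) (by omega) v,
        if_neg (by omega), if_neg (by rintro ⟨h1, h0⟩; subst h1; omega), add_zero] at h
      rw [neg_dotProduct]
      linarith
    have hv := dot_cancel key
    rw [show lam i (Ni i) = lam i (s + 1) from by rw [hNs]]
    exact hv

end SplitMPC
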